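/- For the two-species volume-filling model of Burger et al. with diffusion matrix A(u) = ((D1(1−u2), D1 u1), (D2 u2, D2(1−u1))) with constants D2 ≥ D1 > 0, and H(u) the Hessian of the logarithmic entropy on the triangle D, one has for all z ∈ ℝ² and u ∈ D (with ρ = u1 + u2): zᵀ H(u) A(u) z = D1(1−ρ)(z1²/u1 + z2²/u2) + D1 ((2−ρ)/(1−ρ))(z1+z2)² + (D2−D1)(u2/(1−ρ))(z1 + ((1−u1)/u2) z2)². In particular H(u)A(u) is positive semi-definite on D. -/

import Mathlib

set_option maxHeartbeats 1000000


open Matrix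

/-- Two-species volume-filling model of Burger et al.: identity for the quadratic
form of `H(u) A(u)` and positive semi-definiteness on the triangle `D`. -/
theorem stmt7 (D1 D2 : ℝ) (hD1 : 0 < D1) (hD12 : D1 ≤ D2)
    (u1 u2 : ℝ) (h1 : 0 < u1) (h2 : 0 < u2) (h3 : u1 + u2 < 1)
    (H A : Matrix (Fin 2) (Fin 2) ℝ)
    (hH : H = !![1 / u1 + 1 / (1 - u1 - u2), 1 / (1 - u1 - u2);
                 1 / (1 - u1 - u2), 1 / u2 + 1 / (1 - u1 - u2)])
    (hA : A = !![D1 * (1 - u2), D1 * u1; D2 * u2, D2 * (1 - u1)]) :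
    (∀ z1 z2 : ℝ,
      ![z1, z2] ⬝ᵥ ((H * A) *ᵥ ![z1, z2])
        = D1 * (1 - (u1 + u2)) * (z1 ^ 2 / u1 + z2 ^ 2 / u2)
          + D1 * ((2 - (u1 + u2)) / (1 - (u1 + u2))) * (z1 + z2) ^ 2
          + (D2 - D1) * (u2 / (1 - (u1 + u2))) * (z1 + ((1 - u1) / u2) * z2) ^ 2) ∧
    ∀ z : Fin 2 → ℝ, 0 ≤ z ⬝ᵥ ((H * A) *ᵥ z) := by
  have h3' : (0:ℝ) < 1 - u1 - u2 := by linarith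
  have key : ∀ z1 z2 : ℝ,
      ![z1, z2] ⬝ᵥ ((H * A) *ᵥ ![z1, z2])
        = D1 * (1 - (u1 + u2)) * (z1 ^ 2 / u1 + z2 ^ 2 / u2)
          + D1 * ((2 - (u1 + u2)) / (1 - (u1 + u2))) * (z1 + z2) ^ 2
          + (D2 - D1) * (u2 / (1 - (u1 + u2))) * (z1 + ((1 - u1) / u2) * z2) ^ 2 := by
    intro z1 z2
    subst hH hA
    have hu1 : u1 ≠ 0 := h1.ne'
    have hu2 : u2 ≠ 0 := h2.ne'
    have hs : 1 - u1 - u2 ≠ 0 := h3'.ne'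
    have hs' : 1 - (u1 + u2) ≠ 0 := by intro h; apply hs; linarith
    simp only [Matrix.mul_apply, Matrix.mulVec, dotProduct, Matrix.of_apply, Fin.sum_univ_two,
      Matrix.cons_val', Matrix.cons_val_zero, Matrix.cons_val_one, Matrix.head_cons,
      Matrix.empty_val', Matrix.cons_val_fin_one, Matrix.head_fin_const]
    field_simp
    ring
  refine ⟨key, ?_⟩
  intro z
  have hz : z = ![z 0, z 1] := by
    funext i; fin_cases i <;> simp
  rw [hz, key (z 0) (z 1)]
  have t1 : 0 ≤ D1 * (1 - (u1 + u2)) * ((z 0) ^ 2 / u1 + (z 1) ^ 2 / u2) := by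
    apply mul_nonneg (by nlinarith)
    positivity
  have t2 : 0 ≤ D1 * ((2 - (u1 + u2)) / (1 - (u1 + u2))) * (z 0 + z 1) ^ 2 := by
    apply mul_nonneg (mul_nonneg hD1.le (div_nonneg (by linarith) (by linarith)))
    positivity
  have t3 : 0 ≤ (D2 - D1) * (u2 / (1 - (u1 + u2))) * (z 0 + ((1 - u1) / u2) * z 1) ^ 2 := by
    apply mul_nonneg (mul_nonneg (by linarith) (div_nonneg h2.le (by linarith)))
    positivity
  linarith
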